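/- Let τ > 0, let m ≥ 1 be an integer, let ε ∈ {−1, 1}, and let 0 ≤ σ_1 ≤ … ≤ σ_m ≤ τ and 0 ≤ σ′_1 ≤ … ≤ σ′_m ≤ τ. Define f, f′: [0, τ] → {−1, 1} by f(t) = ε(−1)^{#{h : σ_h < t}} and f′(t) = ε(−1)^{#{h : σ′_h < t}}. Then ∫_0^τ |f(t) − f′(t)| dt ≤ 2 Σ_{h=1}^m |σ_h − σ′_h|. -/

import Mathlib

open MeasureTheory

lemma aux_pow_abs (a b : ℕ) : |(-1:ℝ)^a - (-1)^b| ≤ 2 * |(a:ℝ) - (b:ℝ)| := by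
  by_cases hab : a % 2 = b % 2
  · have : (-1:ℝ)^a = (-1)^b := by
      rw [← Nat.div_add_mod a 2, ← Nat.div_add_mod b 2, pow_add, pow_add, hab,
        pow_mul, pow_mul]
      norm_num
    simp [this]
  · have hne : a ≠ b := fun h => hab (by rw [h])
    have h1 : (1:ℝ) ≤ |(a:ℝ) - b| := by
      have h0 : ((a:ℤ) - b) ≠ 0 := sub_ne_zero.mpr (by exact_mod_cast hne)
      have h2 := Int.one_le_abs h0
      have h3 : (1:ℝ) ≤ |((a:ℤ) - b : ℤ)| := by exact_mod_cast h2
      rw [Int.cast_abs] at h3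
      push_cast at h3
      exact h3
    have h2 : |(-1:ℝ)^a - (-1)^b| ≤ 2 := by
      calc |(-1:ℝ)^a - (-1)^b| ≤ |(-1:ℝ)^a| + |(-1:ℝ)^b| := abs_sub _ _
        _ = 2 := by norm_num [abs_pow]
    linarith

lemma aux_indicator_eq (a b : ℝ) :
    (fun t => |(Set.Ioi a).indicator (fun _ => (1:ℝ)) t -
        (Set.Ioi b).indicator (fun _ => (1:ℝ)) t|) =
      (Set.Ioc (a ⊓ b) (a ⊔ b)).indicator (fun _ => (1:ℝ)) := by
  funext t
  simp only [Set.indicator_apply, Set.mem_Ioi, Set.mem_Ioc, inf_lt_iff, le_sup_iff]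
  by_cases h1 : a < t <;> by_cases h2 : b < t
  · simp [h1, h2, not_le.mpr h1, not_le.mpr h2]
  · simp [h1, h2, not_lt.mp h2, not_le.mpr h1]
  · simp [h1, h2, not_lt.mp h1, not_le.mpr h2]
  · simp [h1, h2]

theorem L1_distance_of_switching_step_functions
    (τ : ℝ) (hτ : 0 < τ) (m : ℕ) (hm : 1 ≤ m)
    (ε : ℝ) (hε : ε = 1 ∨ ε = -1)
    (σs σs' : Fin m → ℝ) (hmono : Monotone σs) (hmono' : Monotone σs')
    (hin : ∀ h, σs h ∈ Set.Icc 0 τ) (hin' : ∀ h, σs' h ∈ Set.Icc 0 τ)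
    (f f' : ℝ → ℝ)
    (hf : ∀ t, f t = ε * (-1 : ℝ) ^ (Finset.univ.filter fun h => σs h < t).card)
    (hf' : ∀ t, f' t = ε * (-1 : ℝ) ^ (Finset.univ.filter fun h => σs' h < t).card) :
    ∫ t in Set.Icc (0:ℝ) τ, |f t - f' t| ≤ 2 * ∑ h, |σs h - σs' h| := by
  set χ : ℝ → ℝ → ℝ := fun a t => (Set.Ioi a).indicator (fun _ => (1:ℝ)) t with hχ
  have hχval : ∀ a t, χ a t = if a < t then 1 else 0 := by
    intro a t; simp [hχ, Set.indicator_apply, Set.mem_Ioi]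
  -- the dominating function
  set G : ℝ → ℝ := fun t => ∑ h : Fin m, 2 * |χ (σs h) t - χ (σs' h) t| with hG
  have hεabs : |ε| = 1 := by rcases hε with h | h <;> simp [h]
  -- pointwise bound
  have hpw : ∀ t, |f t - f' t| ≤ G t := by
    intro t
    rw [hf, hf', ← mul_sub, abs_mul, hεabs, one_mul]
    have hcard : ∀ (σ : Fin m → ℝ),
        (((Finset.univ.filter fun h => σ h < t).card : ℕ) : ℝ) = ∑ h, χ (σ h) t := by
      intro σ
      rw [Finset.card_filter]
      push_cast
      refine Finset.sum_congr rfl fun h _ => ?_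
      rw [hχval]
    calc |(-1:ℝ) ^ (Finset.univ.filter fun h => σs h < t).card -
          (-1) ^ (Finset.univ.filter fun h => σs' h < t).card|
        ≤ 2 * |(((Finset.univ.filter fun h => σs h < t).card : ℕ) : ℝ) -
            (((Finset.univ.filter fun h => σs' h < t).card : ℕ) : ℝ)| := aux_pow_abs _ _
      _ = 2 * |∑ h, (χ (σs h) t - χ (σs' h) t)| := by
          rw [hcard σs, hcard σs', Finset.sum_sub_distrib]
      _ ≤ 2 * ∑ h, |χ (σs h) t - χ (σs' h) t| := by
          gcongr
          exact Finset.abs_sum_le_sum_abs _ _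
      _ = G t := by rw [hG, Finset.mul_sum]
  -- integrability of each summand
  have hint : ∀ (a b : ℝ), IntegrableOn (fun t => 2 * |χ a t - χ b t|) (Set.Icc 0 τ) := by
    intro a b
    have heq : (fun t => |χ a t - χ b t|) =
        (Set.Ioc (a ⊓ b) (a ⊔ b)).indicator (fun _ => (1:ℝ)) := aux_indicator_eq a b
    have : IntegrableOn (fun t => |χ a t - χ b t|) (Set.Icc 0 τ) := by
      rw [heq]
      refine (integrable_indicator_iff measurableSet_Ioc).mpr ?_
      refine (integrableOn_const_iff (by simp)).mpr (Or.inr ?_)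
      exact lt_of_le_of_lt (Measure.restrict_apply_le _ _) measure_Ioc_lt_top
    exact this.const_mul 2
  have hGint : IntegrableOn G (Set.Icc 0 τ) := by
    rw [hG]
    exact integrable_finset_sum _ fun h _ => hint (σs h) (σs' h)
  -- main estimate
  have hmain : ∫ t in Set.Icc (0:ℝ) τ, |f t - f' t| ≤ ∫ t in Set.Icc (0:ℝ) τ, G t := by
    refine integral_mono_of_nonneg ?_ hGint ?_
    · exact Filter.Eventually.of_forall fun t => abs_nonneg _
    · exact Filter.Eventually.of_forall fun t => hpw t
  refine hmain.trans ?_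
  rw [hG, integral_finset_sum _ fun h _ => hint (σs h) (σs' h)]
  have hterm : ∀ h : Fin m, ∫ t in Set.Icc (0:ℝ) τ, 2 * |χ (σs h) t - χ (σs' h) t| =
      2 * |σs h - σs' h| := by
    intro h
    rw [integral_const_mul]
    congr 1
    have heq : (fun t => |χ (σs h) t - χ (σs' h) t|) =
        (Set.Ioc (σs h ⊓ σs' h) (σs h ⊔ σs' h)).indicator (fun _ => (1:ℝ)) :=
      aux_indicator_eq _ _
    rw [heq, setIntegral_indicator measurableSet_Ioc]
    have hsub : Set.Ioc (σs h ⊓ σs' h) (σs h ⊔ σs' h) ⊆ Set.Icc 0 τ := by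
      intro x hx
      obtain ⟨h1, h2⟩ := hx
      obtain ⟨ha1, ha2⟩ := hin h
      obtain ⟨hb1, hb2⟩ := hin' h
      constructor
      · exact le_trans (le_inf ha1 hb1) h1.le
      · exact le_trans h2 (sup_le ha2 hb2)
    rw [Set.inter_eq_self_of_subset_right hsub, setIntegral_const, smul_eq_mul, mul_one,
      measureReal_def, Real.volume_Ioc, ENNReal.toReal_ofReal (show (0:ℝ) ≤ σs h ⊔ σs' h - σs h ⊓ σs' h from sub_nonneg.mpr inf_le_sup)]
    rw [abs_sub_comm]
    exact max_sub_min_eq_abs (σs h) (σs' h)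
  refine le_of_eq ?_
  rw [Finset.sum_congr rfl fun h _ => hterm h, ← Finset.mul_sum]
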